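/- Let k₊ > 0 and let a₀, a₁, a₂ ∈ ℝ with a₀ ≥ 0, a₁ > 0 and a₂ < 0. Define f(s) := a₀ + a₁·P(s) + a₂·Q(s) and w₀ := a₁√k₊/√(a₁² + a₂²). Then for every s ∈ ℂ with −√k₊ < Im s < w₀, the value f(s) is not a nonpositive real number, i.e. f(s) ∉ {t ∈ ℝ : t ≤ 0}. -/

import Mathlib

open Complex Set

noncomputable section

/-- Principal square root on ℂ via the principal power. -/
def csqrt (z : ℂ) : ℂ := z ^ (1/2 : ℂ)

def Pf (kp : ℝ) (s : ℂ) : ℂ := csqrt (1 - s ^ 2 / (2 * (kp : ℂ) * Complex.I))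

def Qf (kp : ℝ) (s : ℂ) : ℂ :=
  s * Complex.exp (-(Real.pi : ℂ) / 4 * Complex.I) / (Real.sqrt (2 * kp) : ℂ)

lemma csqrt_re_nonneg (z : ℂ) : 0 ≤ (csqrt z).re := by
  by_cases hz : z = 0
  · simp [csqrt, hz, zero_cpow (by norm_num : (1/2:ℂ) ≠ 0)]
  · rw [csqrt, Complex.cpow_def_of_ne_zero hz, Complex.exp_re]
    apply mul_nonneg (Real.exp_pos _).le
    apply Real.cos_nonneg_of_mem_Icc
    constructor
    · have := Complex.neg_pi_lt_arg z
      simp [Complex.log_im]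
      nlinarith [this, Complex.log_im z]
    · have := Complex.arg_le_pi z
      simp [Complex.log_im]
      nlinarith

lemma csqrt_sq (z : ℂ) : csqrt z ^ 2 = z := by
  by_cases hz : z = 0
  · simp [csqrt, hz, zero_cpow (by norm_num : (1/2:ℂ) ≠ 0)]
  · rw [csqrt, sq, ← Complex.cpow_add _ _ hz]
    norm_num

lemma Pf_sq (kp : ℝ) (hkp : 0 < kp) (s : ℂ) : Pf kp s ^ 2 = 1 - Qf kp s ^ 2 := by
  have harg : (-(Real.pi : ℂ) / 4 * Complex.I) = ((-(Real.pi/4) : ℝ) : ℂ) * Complex.I := by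
    push_cast; ring
  have hEsq : Complex.exp (-(Real.pi : ℂ) / 4 * Complex.I) ^ 2 = -Complex.I := by
    rw [harg, sq, ← Complex.exp_add,
      show ((-(Real.pi/4) : ℝ) : ℂ) * Complex.I + ((-(Real.pi/4) : ℝ) : ℂ) * Complex.I
        = ((-(Real.pi/2) : ℝ) : ℂ) * Complex.I by push_cast; ring,
      Complex.exp_mul_I, ← Complex.ofReal_cos, ← Complex.ofReal_sin]
    simp [Real.cos_pi_div_two, Real.sin_pi_div_two]
  have hcsq : ((Real.sqrt (2*kp) : ℝ) : ℂ) ^ 2 = (2*kp : ℂ) := by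
    rw [← Complex.ofReal_pow, Real.sq_sqrt (by positivity)]
    push_cast; ring
  have hk : (kp : ℂ) ≠ 0 := by exact_mod_cast hkp.ne'
  have hQ2 : Qf kp s ^ 2 = s ^ 2 * (-Complex.I) / (2*kp) := by
    rw [Qf, div_pow, mul_pow, hEsq, hcsq]
  have hZ : (1 : ℂ) - s ^ 2 / (2 * (kp : ℂ) * Complex.I) = 1 - Qf kp s ^ 2 := by
    rw [hQ2]
    have hI : Complex.I ≠ 0 := Complex.I_ne_zero
    field_simp
    ring_nf
    simp [Complex.I_sq]
    ring
  rw [Pf, csqrt_sq, hZ]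

lemma Qf_re_add_im (kp : ℝ) (hkp : 0 < kp) (s : ℂ) :
    (Qf kp s).re + (Qf kp s).im = s.im / Real.sqrt kp := by
  have harg : (-(Real.pi : ℂ) / 4 * Complex.I) = ((-(Real.pi/4) : ℝ) : ℂ) * Complex.I := by
    push_cast; ring
  have hEre : (Complex.exp (-(Real.pi : ℂ) / 4 * Complex.I)).re = Real.sqrt 2 / 2 := by
    rw [harg, Complex.exp_ofReal_mul_I_re, Real.cos_neg, Real.cos_pi_div_four]
  have hEim : (Complex.exp (-(Real.pi : ℂ) / 4 * Complex.I)).im = -(Real.sqrt 2 / 2) := by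
    rw [harg, Complex.exp_ofReal_mul_I_im, Real.sin_neg, Real.sin_pi_div_four]
  have hc : Real.sqrt (2*kp) = Real.sqrt 2 * Real.sqrt kp := Real.sqrt_mul (by norm_num) kp
  have h2 : Real.sqrt 2 * Real.sqrt 2 = 2 := Real.mul_self_sqrt (by norm_num)
  have hkpos : 0 < Real.sqrt kp := Real.sqrt_pos.mpr hkp
  have h2pos : 0 < Real.sqrt 2 := by norm_num [Real.sqrt_pos]
  rw [Qf]
  rw [Complex.div_re, Complex.div_im]
  simp only [Complex.mul_re, Complex.mul_im, Complex.ofReal_re, Complex.ofReal_im,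
    Complex.normSq_ofReal, hEre, hEim, hc]
  field_simp
  ring_nf

theorem statement13 (kp a0 a1 a2 : ℝ) (hkp : 0 < kp)
    (ha0 : 0 ≤ a0) (ha1 : 0 < a1) (ha2 : a2 < 0) :
    ∀ s : ℂ,
      -Real.sqrt kp < s.im → s.im < a1 * Real.sqrt kp / Real.sqrt (a1 ^ 2 + a2 ^ 2) →
      (a0 : ℂ) + (a1 : ℂ) * Pf kp s + (a2 : ℂ) * Qf kp s ∉ {z : ℂ | z.im = 0 ∧ z.re ≤ 0} := by
  intro s h1 h2 hmem
  obtain ⟨him, hre⟩ := hmem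
  obtain ⟨p, hp_def⟩ : ∃ x, x = (Pf kp s).re := ⟨_, rfl⟩
  obtain ⟨q, hq_def⟩ : ∃ x, x = (Pf kp s).im := ⟨_, rfl⟩
  obtain ⟨u, hu_def⟩ : ∃ x, x = (Qf kp s).re := ⟨_, rfl⟩
  obtain ⟨v, hv_def⟩ : ∃ x, x = (Qf kp s).im := ⟨_, rfl⟩
  have hApos : 0 < a1 ^ 2 + a2 ^ 2 := by nlinarith
  have hkpos : 0 < Real.sqrt kp := Real.sqrt_pos.mpr hkp
  have hcA : 0 < Real.sqrt (a1 ^ 2 + a2 ^ 2) := Real.sqrt_pos.mpr hApos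
  have hcA2 : Real.sqrt (a1 ^ 2 + a2 ^ 2) * Real.sqrt (a1 ^ 2 + a2 ^ 2) = a1 ^ 2 + a2 ^ 2 :=
    Real.mul_self_sqrt hApos.le
  -- components of the hypothesis
  have him' : a1 * q + a2 * v = 0 := by
    rw [hq_def, hv_def]
    simpa [Complex.add_im, Complex.mul_im, Complex.ofReal_re, Complex.ofReal_im] using him
  have hre' : a0 + a1 * p + a2 * u ≤ 0 := by
    rw [hp_def, hu_def]
    simpa [Complex.add_re, Complex.mul_re, Complex.ofReal_re, Complex.ofReal_im] using hre
  obtain ⟨T, hT_def⟩ : ∃ x, x = a1 * p + a2 * u := ⟨_, rfl⟩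
  have hT : T ≤ 0 := by rw [hT_def]; linarith
  have e1 : a1 * p = T - a2 * u := by rw [hT_def]; ring
  have e2 : a1 * q = -(a2 * v) := by linarith
  -- components of P^2 = 1 - Q^2
  have hP2 := Pf_sq kp hkp s
  have hiii : p * p - q * q = 1 - (u * u - v * v) := by
    rw [hp_def, hq_def, hu_def, hv_def]
    simpa [pow_two, Complex.mul_re, Complex.sub_re, Complex.one_re]
      using congrArg Complex.re hP2
  have hiv : p * q + q * p = -(u * v + v * u) := by
    rw [hp_def, hq_def, hu_def, hv_def]
    simpa [pow_two, Complex.mul_im, Complex.sub_im, Complex.one_im]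
      using congrArg Complex.im hP2
  have hpnn : 0 ≤ p := hp_def ▸ csqrt_re_nonneg _
  have huv : u + v = s.im / Real.sqrt kp := by
    rw [hu_def, hv_def]; exact Qf_re_add_im kp hkp s
  have hub0 : u + v < a1 / Real.sqrt (a1 ^ 2 + a2 ^ 2) := by
    have e3 : s.im / Real.sqrt kp
        < a1 * Real.sqrt kp / Real.sqrt (a1 ^ 2 + a2 ^ 2) / Real.sqrt kp :=
      (div_lt_div_iff_of_pos_right hkpos).mpr h2
    have e4 : a1 * Real.sqrt kp / Real.sqrt (a1 ^ 2 + a2 ^ 2) / Real.sqrt kp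
        = a1 / Real.sqrt (a1 ^ 2 + a2 ^ 2) := by field_simp
    rw [e4, ← huv] at e3
    linarith
  have hlb0 : -1 < u + v := by
    have e3 : -Real.sqrt kp / Real.sqrt kp < s.im / Real.sqrt kp :=
      (div_lt_div_iff_of_pos_right hkpos).mpr h1
    have e4 : -Real.sqrt kp / Real.sqrt kp = -1 := by field_simp
    rw [e4, ← huv] at e3
    linarith
  clear him hre hP2 hp_def hq_def hu_def hv_def huv hT_def h1 h2 hre'
  by_cases hv : v = 0
  · -- real case
    have hq0 : q = 0 := by
      have : a1 * q = 0 := by rw [hv] at him'; linarith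
      exact (mul_eq_zero.mp this).resolve_left (ne_of_gt ha1)
    have hub : u < a1 / Real.sqrt (a1 ^ 2 + a2 ^ 2) := by rw [hv] at hub0; linarith
    have hlb : -1 < u := by rw [hv] at hlb0; linarith
    have hult1 : u < 1 := by
      have ha2sq : 0 < a2 ^ 2 := by nlinarith
      have h5 : a1 < Real.sqrt (a1 ^ 2 + a2 ^ 2) := (Real.lt_sqrt ha1.le).mpr (by nlinarith)
      calc u < a1 / Real.sqrt (a1 ^ 2 + a2 ^ 2) := hub
        _ < 1 := by rw [div_lt_one hcA]; exact h5
    have hu2 : u * u < 1 := by nlinarith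
    have hp2 : p * p = 1 - u * u := by rw [hv, hq0] at hiii; linarith
    have hppos : 0 < p := by
      rcases hpnn.lt_or_eq with h | h
      · exact h
      · exfalso; nlinarith
    have hupos : 0 < u := by nlinarith
    have hucA : u * Real.sqrt (a1 ^ 2 + a2 ^ 2) < a1 := (lt_div_iff₀ hcA).mp hub
    have hABle : (a1 * p) * (a1 * p) ≤ (-(a2 * u)) * (-(a2 * u)) :=
      mul_self_le_mul_self (mul_nonneg ha1.le hpnn) (by linarith)
    have hBlt : (u * Real.sqrt (a1 ^ 2 + a2 ^ 2)) * (u * Real.sqrt (a1 ^ 2 + a2 ^ 2))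
        < a1 * a1 := mul_self_lt_mul_self (mul_nonneg hupos.le hcA.le) hucA
    have hs9 : (u * Real.sqrt (a1 ^ 2 + a2 ^ 2)) * (u * Real.sqrt (a1 ^ 2 + a2 ^ 2))
        = u * u * (a1 ^ 2 + a2 ^ 2) := by linear_combination (u * u) * hcA2
    have h7 : u * u * (a1 ^ 2 + a2 ^ 2) < a1 * a1 := by rw [← hs9]; exact hBlt
    have hp2' : (a1 * p) * (a1 * p) = a1 * a1 * (1 - u * u) := by
      linear_combination (a1 * a1) * hp2
    linarith [hABle, hp2', h7]
  · -- non-real case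
    have key : -a2 * (T - a2 * u) = -(a1 ^ 2) * u := by
      apply mul_right_cancel₀ hv
      linear_combination (a1 ^ 2 / 2) * hiv - (a1 * q) * e1 - (T - a2 * u) * e2
    have hAu : (a1 ^ 2 + a2 ^ 2) * u = a2 * T := by linear_combination key
    have hpT : p * (a1 * (a1 ^ 2 + a2 ^ 2)) = T * a1 ^ 2 := by
      linear_combination (a1 ^ 2 + a2 ^ 2) * e1 - a2 * hAu
    have hTnn : 0 ≤ T := by
      have h8 : 0 ≤ T * a1 ^ 2 := by
        rw [← hpT]; exact mul_nonneg hpnn (by positivity)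
      have h9 := div_nonneg h8 (sq_nonneg a1)
      rwa [mul_div_assoc, div_self (by positivity : (a1:ℝ) ^ 2 ≠ 0), mul_one] at h9
    have hTz : T = 0 := le_antisymm hT hTnn
    have huz : u = 0 := by
      have : (a1 ^ 2 + a2 ^ 2) * u = 0 := by rw [hAu, hTz, mul_zero]
      exact (mul_eq_zero.mp this).resolve_left (ne_of_gt hApos)
    have hpz : p = 0 := by
      have h9 : p * (a1 * (a1 ^ 2 + a2 ^ 2)) = 0 := by rw [hpT, hTz, zero_mul]
      exact (mul_eq_zero.mp h9).resolve_right (ne_of_gt (by positivity))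
    rw [hpz, huz] at hiii
    linarith [mul_self_nonneg q, mul_self_nonneg v, hiii]
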